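/- Let r ≥ 2 be a real number and G a graph. Then G admits a circular nowhere-zero r-flow if and only if G admits an r-MCNZF. Moreover, if f is an r-MCNZF on a reference orientation D₀ of G, then there exist an orientation D of G and a real-valued circular nowhere-zero r-flow g on D such that for every edge e of G, g(e) ≡ f_D(e) (mod r), where f_D(e) = f(e) if e has the same direction in D₀ and D, and f_D(e) = −f(e) otherwise. -/

import Mathlib

open Finset


open Finset

/-- A finite multigraph given with a reference orientation: each edge `e` goes
from `src e` to `tgt e`.  An orientation of the graph is a sign function
`σ : E → ℤˣ` telling, for each edge, whether it keeps (`1`) or reverses (`-1`)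
its reference direction. -/
structure Multigraph where
  V : Type
  E : Type
  [fintV : Fintype V]
  [fintE : Fintype E]
  [decV : DecidableEq V]
  [decE : DecidableEq E]
  src : E → V
  tgt : E → V

attribute [instance] Multigraph.fintV Multigraph.fintE Multigraph.decV Multigraph.decE

/-- `f` is a flow with respect to the reference orientation: at every vertex the
sum over outgoing edges equals the sum over incoming edges. -/
def Multigraph.IsFlow (G : Multigraph) {M : Type*} [AddCommMonoid M] (f : G.E → M) : Prop :=
  ∀ v : G.V,
    ∑ e ∈ Finset.univ.filter (fun e => G.src e = v), f e =
    ∑ e ∈ Finset.univ.filter (fun e => G.tgt e = v), f e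

/-- `f` is a flow on the orientation `σ` of `G` (values of `f` are read in the
direction given by `σ`). -/
def Multigraph.IsFlowOn (G : Multigraph) {M : Type*} [AddCommGroup M]
    (σ : G.E → ℤˣ) (f : G.E → M) : Prop :=
  G.IsFlow (fun e => ((σ e : ℤ) • f e))

/-- The open interval `(a,b)` of `ℝ/rℤ`: the points traversed strictly clockwise
from `a` to `b`, with the convention `(a,a) = ℝ/rℤ \ {a}`. -/
noncomputable def openArc (r a b : ℝ) : Set (AddCircle r) :=
  (fun t : ℝ => (t : AddCircle r)) '' Set.Ioo a (a + (r - Int.fract ((a - b) / r) * r))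

/-- The closed interval `[a,b]` of `ℝ/rℤ`: the points traversed clockwise from
`a` to `b`, endpoints included, with the convention `[a,a] = {a}`. -/
noncomputable def closedArc (r a b : ℝ) : Set (AddCircle r) :=
  (fun t : ℝ => (t : AddCircle r)) '' Set.Icc a (a + Int.fract ((b - a) / r) * r)

/-- `G` has a circular nowhere-zero `r`-flow: an orientation together with a
real-valued flow all of whose values lie in `[1, r-1]`. -/
def Multigraph.HasCNZF (G : Multigraph) (r : ℝ) : Prop :=
  ∃ (σ : G.E → ℤˣ) (f : G.E → ℝ), G.IsFlowOn σ f ∧ ∀ e, f e ∈ Set.Icc (1:ℝ) (r - 1)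

/-- The circular flow number of `G`, as an extended real (`⊤` if `G` admits no
circular nowhere-zero `r`-flow for any `r`, e.g. if `G` has a bridge). -/
noncomputable def circFlowNumber (G : Multigraph) : EReal :=
  sInf {x : EReal | ∃ r : ℝ, x = (r : EReal) ∧ G.HasCNZF r}

/-- The graph `G ∪ e₀` obtained from `G` by adding one extra edge `e₀ = none`
joining `u` to `v`. -/
def Multigraph.addEdge (G : Multigraph) (u v : G.V) : Multigraph where
  V := G.V
  E := Option G.E
  src := fun e => e.elim u G.src
  tgt := fun e => e.elim v G.tgt

/-- The capacity of the capacitated g-edge `(G, cap)` with terminals `u,v`: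
all values `f e₀` of modular flows `f` on `G ∪ e₀` (over all orientations) whose
value on each edge `e` of `G` lies in the prescribed set `cap e`. -/
def CPcap (r : ℝ) (G : Multigraph) (cap : G.E → Set (AddCircle r)) (u v : G.V) :
    Set (AddCircle r) :=
  {t | ∃ (σ : Option G.E → ℤˣ) (f : Option G.E → AddCircle r),
        (G.addEdge u v).IsFlowOn σ f ∧ (∀ e : G.E, f (some e) ∈ cap e) ∧ f none = t}

/-- The open `r`-capacity `CP_r(G_{u,v})` of the g-edge `G_{u,v}`. -/
noncomputable def CP (r : ℝ) (G : Multigraph) (u v : G.V) : Set (AddCircle r) :=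
  CPcap r G (fun _ => openArc r 1 (r - 1)) u v

/-- A capacitated graph `(G, cap)` admits a flow respecting all capacities
(for `cap e = (1,4) ⊆ ℝ/5ℤ` everywhere this is a sub-5-MCNZF). -/
def HasCapFlow (r : ℝ) (G : Multigraph) (cap : G.E → Set (AddCircle r)) : Prop :=
  ∃ (σ : G.E → ℤˣ) (f : G.E → AddCircle r), G.IsFlowOn σ f ∧ ∀ e, f e ∈ cap e

/-- Deletion of the edge `e₀`. -/
def Multigraph.deleteEdge (G : Multigraph) (e₀ : G.E) : Multigraph where
  V := G.V
  E := {e : G.E // e ≠ e₀}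
  src := fun e => G.src e.1
  tgt := fun e => G.tgt e.1

/-- Degree of a vertex (loops count twice). -/
def Multigraph.degree (G : Multigraph) (v : G.V) : ℕ :=
  (Finset.univ.filter (fun e => G.src e = v)).card +
  (Finset.univ.filter (fun e => G.tgt e = v)).card

/-- The tail of edge `e` in the orientation `σ`. -/
def Multigraph.osrc (G : Multigraph) (σ : G.E → ℤˣ) (e : G.E) : G.V :=
  if σ e = 1 then G.src e else G.tgt e

/-- The head of edge `e` in the orientation `σ`. -/
def Multigraph.otgt (G : Multigraph) (σ : G.E → ℤˣ) (e : G.E) : G.V :=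
  if σ e = 1 then G.tgt e else G.src e

namespace CNZFAux

variable (G : Multigraph)

/-- The boundary operator: net outflow at a vertex. -/
def bd {M : Type*} [AddCommGroup M] (c : G.E → M) (v : G.V) : M :=
  (∑ e ∈ Finset.univ.filter (fun e => G.src e = v), c e) -
  (∑ e ∈ Finset.univ.filter (fun e => G.tgt e = v), c e)

open Classical in
lemma sum_bd {M : Type*} [AddCommGroup M] (c : G.E → M) (S : Finset G.V) :
    ∑ v ∈ S, bd G c v =
      (∑ e ∈ Finset.univ.filter (fun e => G.src e ∈ S ∧ G.tgt e ∉ S), c e)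
      - (∑ e ∈ Finset.univ.filter (fun e => G.tgt e ∈ S ∧ G.src e ∉ S), c e) := by
  classical
  have hsrc : ∑ v ∈ S, ∑ e ∈ Finset.univ.filter (fun e => G.src e = v), c e
      = ∑ e ∈ Finset.univ.filter (fun e => G.src e ∈ S), c e := by
    rw [← Finset.sum_fiberwise_of_maps_to (g := G.src) (t := S)
      (fun e he => (Finset.mem_filter.mp he).2) c]
    refine Finset.sum_congr rfl fun v hv => ?_
    refine Finset.sum_congr ?_ fun _ _ => rfl
    ext e
    simp only [Finset.mem_filter, Finset.mem_univ, true_and]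
    constructor
    · intro h; exact ⟨by rw [h]; exact hv, h⟩
    · rintro ⟨-, h⟩; exact h
  have htgt : ∑ v ∈ S, ∑ e ∈ Finset.univ.filter (fun e => G.tgt e = v), c e
      = ∑ e ∈ Finset.univ.filter (fun e => G.tgt e ∈ S), c e := by
    rw [← Finset.sum_fiberwise_of_maps_to (g := G.tgt) (t := S)
      (fun e he => (Finset.mem_filter.mp he).2) c]
    refine Finset.sum_congr rfl fun v hv => ?_
    refine Finset.sum_congr ?_ fun _ _ => rfl
    ext e
    simp only [Finset.mem_filter, Finset.mem_univ, true_and]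
    constructor
    · intro h; exact ⟨by rw [h]; exact hv, h⟩
    · rintro ⟨-, h⟩; exact h
  have hsplit1 : ∑ e ∈ Finset.univ.filter (fun e => G.src e ∈ S), c e
      = (∑ e ∈ Finset.univ.filter (fun e => G.src e ∈ S ∧ G.tgt e ∈ S), c e)
        + ∑ e ∈ Finset.univ.filter (fun e => G.src e ∈ S ∧ G.tgt e ∉ S), c e := by
    rw [← Finset.sum_filter_add_sum_filter_not (Finset.univ.filter (fun e => G.src e ∈ S))
      (fun e => G.tgt e ∈ S) c, Finset.filter_filter, Finset.filter_filter]
  have hsplit2 : ∑ e ∈ Finset.univ.filter (fun e => G.tgt e ∈ S), c e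
      = (∑ e ∈ Finset.univ.filter (fun e => G.src e ∈ S ∧ G.tgt e ∈ S), c e)
        + ∑ e ∈ Finset.univ.filter (fun e => G.tgt e ∈ S ∧ G.src e ∉ S), c e := by
    rw [← Finset.sum_filter_add_sum_filter_not (Finset.univ.filter (fun e => G.tgt e ∈ S))
      (fun e => G.src e ∈ S) c, Finset.filter_filter, Finset.filter_filter]
    congr 1
    apply Finset.sum_congr _ fun _ _ => rfl
    apply Finset.filter_congr
    intro e _
    exact and_comm
  unfold bd
  rw [Finset.sum_sub_distrib, hsrc, htgt, hsplit1, hsplit2]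
  abel

lemma sum_bd_univ {M : Type*} [AddCommGroup M] (c : G.E → M) :
    ∑ v, bd G c v = 0 := by
  classical
  rw [sum_bd]
  simp

lemma sum_update {M : Type*} [AddCommGroup M] (c : G.E → M) (e : G.E) (x : M) (s : Finset G.E) :
    ∑ e' ∈ s, Function.update c e x e' = (∑ e' ∈ s, c e') + (if e ∈ s then x - c e else 0) := by
  classical
  by_cases he : e ∈ s
  · rw [Finset.sum_update_of_mem he, if_pos he, ← Finset.sum_erase_add s c he,
      Finset.sdiff_singleton_eq_erase]
    abel
  · rw [if_neg he, add_zero]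
    exact Finset.sum_congr rfl fun a ha => Function.update_of_ne (by rintro rfl; exact he ha) _ _

lemma bd_update {M : Type*} [AddCommGroup M] (c : G.E → M) (e : G.E) (x : M) (v : G.V) :
    bd G (Function.update c e x) v =
      bd G c v + (if G.src e = v then x - c e else 0) - (if G.tgt e = v then x - c e else 0) := by
  classical
  unfold bd
  rw [sum_update, sum_update]
  simp only [Finset.mem_filter, Finset.mem_univ, true_and]
  abel

/-- Integer weight of a boolean edge set. -/
def ib (b : G.E → Bool) (e : G.E) : ℤ := if b e then 1 else 0

/-- One unit of excess can be moved from `u` to `w` by a single edge flip. -/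
def step (b : G.E → Bool) (u w : G.V) : Prop :=
  ∃ e, (G.src e = u ∧ G.tgt e = w ∧ b e = true) ∨ (G.src e = w ∧ G.tgt e = u ∧ b e = false)

lemma ib_update (b : G.E → Bool) (e : G.E) (x : Bool) :
    ib G (Function.update b e x) = Function.update (ib G b) e (if x then 1 else 0) := by
  funext e'
  by_cases h : e' = e
  · subst h; simp [ib, Function.update]
  · simp [ib, Function.update_of_ne h]

lemma bd_single {b : G.E → Bool} {u x : G.V} {e : G.E}
    (he : (G.src e = u ∧ G.tgt e = x ∧ b e = true) ∨ (G.src e = x ∧ G.tgt e = u ∧ b e = false)) :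
    ∀ v, bd G (ib G (Function.update b e (!b e))) v =
      bd G (ib G b) v - (if u = v then 1 else 0) + (if x = v then 1 else 0) := by
  intro v
  rw [ib_update, bd_update]
  rcases he with ⟨hs, ht, hb⟩ | ⟨hs, ht, hb⟩ <;> subst hs <;> subst ht <;>
    simp only [ib, hb, Bool.not_true, Bool.not_false, if_true, if_false] <;>
    split_ifs <;> (try contradiction) <;> ring

lemma chain_imp_of_mem {α : Type*} {R R' : α → α → Prop} :
    ∀ {l : List α} {a : α}, List.Chain R a l →
      (∀ y z, y ∈ a :: l → z ∈ l → R y z → R' y z) → List.Chain R' a l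
  | [], _, _, _ => List.Chain.nil
  | x :: l, a, h, himp => by
    rcases List.chain_cons.mp h with ⟨h1, h2⟩
    exact List.chain_cons.mpr ⟨himp a x (by simp) (by simp) h1,
      chain_imp_of_mem h2 (fun y z hy hz hr =>
        himp y z (List.mem_cons_of_mem _ hy) (List.mem_cons_of_mem _ hz) hr)⟩

lemma step_update {b : G.E → Bool} {e : G.E} {u x y z : G.V}
    (he : (G.src e = u ∧ G.tgt e = x ∧ b e = true) ∨ (G.src e = x ∧ G.tgt e = u ∧ b e = false))
    (hy : y ≠ u) (hz : z ≠ u) (h : step G b y z) :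
    step G (Function.update b e (!b e)) y z := by
  obtain ⟨e', he'⟩ := h
  have hne : e' ≠ e := by
    rintro rfl
    rcases he with ⟨hs, ht, hb⟩ | ⟨hs, ht, hb⟩ <;>
      rcases he' with ⟨hs', ht', hb'⟩ | ⟨hs', ht', hb'⟩
    · exact hy (hs' ▸ hs)
    · exact hz (hs' ▸ hs)
    · exact hz (ht' ▸ ht)
    · exact hy (ht' ▸ ht)
  exact ⟨e', by rwa [Function.update_of_ne hne]⟩

lemma flip_along (w : G.V) : ∀ (l : List G.V) (b : G.E → Bool) (u : G.V),
    List.Chain (step G b) u (l ++ [w]) → (u :: (l ++ [w])).Nodup →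
    ∃ b' : G.E → Bool, ∀ v, bd G (ib G b') v = bd G (ib G b) v
        - (if u = v then 1 else 0) + (if w = v then 1 else 0)
  | [], b, u, hchain, _ => by
    obtain ⟨e, he⟩ := List.isChain_pair.mp hchain
    exact ⟨Function.update b e (!b e), bd_single G he⟩
  | x :: l, b, u, hchain, hnd => by
    rcases List.chain_cons.mp hchain with ⟨h1, h2⟩
    obtain ⟨e, he⟩ := h1
    have hmem : ∀ y ∈ x :: (l ++ [w]), y ≠ u := by
      intro y hy
      rintro rfl
      exact (List.nodup_cons.mp hnd).1 hy
    have hchain1 : List.Chain (step G (Function.update b e (!b e))) x (l ++ [w]) := by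
      refine chain_imp_of_mem h2 (fun y z hy hz hr => ?_)
      exact step_update G he (hmem y hy) (hmem z (List.mem_cons_of_mem _ hz)) hr
    have hnd1 : (x :: (l ++ [w])).Nodup := (List.nodup_cons.mp hnd).2
    obtain ⟨b₂, hb₂⟩ := flip_along w l (Function.update b e (!b e)) x hchain1 hnd1
    refine ⟨b₂, fun v => ?_⟩
    rw [hb₂ v, bd_single G he v]
    ring

lemma exists_nodup_chain_aux {α : Type*} (R : α → α → Prop) {w : α} :
    ∀ {u : α}, Relation.ReflTransGen R u w →
      u = w ∨ ∃ l : List α, List.Chain R u (l ++ [w]) ∧ (u :: (l ++ [w])).Nodup := by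
  intro u h
  induction h using Relation.ReflTransGen.head_induction_on with
  | refl => exact Or.inl rfl
  | head hstep _ ih =>
    rename_i a c _
    by_cases hau : a = w
    · exact Or.inl hau
    right
    rcases ih with rfl | ⟨l, hchain, hnd⟩
    · exact ⟨[], List.isChain_pair.mpr hstep, by simp [hau]⟩
    by_cases hmem : a ∈ c :: (l ++ [w])
    · have hmem' : a ∈ c :: l := by
        have : a ∈ (c :: l) ++ [w] := by simpa using hmem
        rcases List.mem_append.mp this with h' | h'
        · exact h'
        · exact absurd (List.mem_singleton.mp h') hau
      obtain ⟨s, t, hst⟩ := List.append_of_mem hmem'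
      have hsuffix : c :: (l ++ [w]) = s ++ (a :: (t ++ [w])) := by
        have : (c :: l) ++ [w] = (s ++ a :: t) ++ [w] := by rw [hst]
        simpa using this
      have hnodup : (a :: (t ++ [w])).Nodup := by
        refine List.Nodup.sublist ?_ hnd
        rw [hsuffix]
        exact List.sublist_append_right s _
      have hchain' : List.Chain R a (t ++ [w]) := by
        rcases s with _ | ⟨s0, s'⟩
        · simp only [List.nil_append, List.cons.injEq] at hsuffix
          obtain ⟨rfl, h2⟩ := hsuffix
          rw [h2] at hchain
          exact hchain
        · simp only [List.cons_append, List.cons.injEq] at hsuffix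
          obtain ⟨rfl, h2⟩ := hsuffix
          rw [h2] at hchain
          exact (List.isChain_cons_split.mp hchain).2
      exact ⟨t, hchain', hnodup⟩
    · exact ⟨c :: l, List.chain_cons.mpr ⟨hstep, hchain⟩, List.nodup_cons.mpr ⟨hmem, hnd⟩⟩

theorem exists_boolflow (r : ℝ) (hr : 2 ≤ r) (h₀ : G.E → ℝ)
    (hmem : ∀ e, h₀ e ∈ Set.Icc (1:ℝ) (r-1)) (z : G.V → ℤ)
    (hz : ∀ v, bd G h₀ v = (z v : ℝ) * r) :
    ∃ b : G.E → Bool, ∀ v, bd G (ib G b) v = z v := by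
  classical
  have hr0 : (0:ℝ) < r := by linarith
  have hzsum : ∑ v, z v = 0 := by
    have h1 : (∑ v, (z v : ℝ)) * r = 0 := by
      rw [Finset.sum_mul]
      simp_rw [← hz]
      exact sum_bd_univ G h₀
    have h2 : (∑ v, (z v : ℝ)) = 0 := by
      rcases mul_eq_zero.mp h1 with h | h
      · exact h
      · exact absurd h hr0.ne'
    have h3 : ((∑ v, z v : ℤ) : ℝ) = 0 := by push_cast; exact h2
    exact_mod_cast h3
  set D : (G.E → Bool) → G.V → ℤ := fun b v => bd G (ib G b) v - z v with hD
  have hDsum : ∀ b, ∑ v, D b v = 0 := by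
    intro b
    simp only [hD]
    rw [Finset.sum_sub_distrib, sum_bd_univ, hzsum]
    simp
  suffices h : ∀ n (b : G.E → Bool), (∑ v, (D b v).natAbs) ≤ n → ∃ b', ∀ v, D b' v = 0 by
    obtain ⟨b', hb'⟩ := h _ (fun _ => false) le_rfl
    refine ⟨b', fun v => ?_⟩
    have := hb' v
    simp only [hD] at this
    omega
  intro n
  induction n with
  | zero =>
    intro b hb
    refine ⟨b, fun v => ?_⟩
    have h0 : ∑ v, (D b v).natAbs = 0 := Nat.le_zero.mp hb
    have := (Finset.sum_eq_zero_iff).mp h0 v (Finset.mem_univ v)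
    omega
  | succ n ih =>
    intro b hb
    by_cases hall : ∀ v, D b v = 0
    · exact ⟨b, hall⟩
    push_neg at hall
    obtain ⟨v₀, hv₀⟩ := hall
    have huex : ∃ u, 0 < D b u := by
      by_contra hcon
      push_neg at hcon
      have hlt : ∑ v, D b v < ∑ _v : G.V, (0:ℤ) :=
        Finset.sum_lt_sum (fun i _ => hcon i) ⟨v₀, Finset.mem_univ _, lt_of_le_of_ne (hcon v₀) hv₀⟩
      rw [hDsum b] at hlt
      simp at hlt
    obtain ⟨u, hu⟩ := huex
    set S : Finset G.V := Finset.univ.filter (fun v => Relation.ReflTransGen (step G b) u v) with hS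
    have huS : u ∈ S := by
      simp only [hS, Finset.mem_filter, Finset.mem_univ, true_and]
      exact Relation.ReflTransGen.refl
    have hclosA : ∀ e, G.src e ∈ S → G.tgt e ∉ S → b e = false := by
      intro e h1 h2
      cases hbe : b e with
      | false => rfl
      | true =>
        exfalso
        apply h2
        simp only [hS, Finset.mem_filter, Finset.mem_univ, true_and] at h1 ⊢
        exact h1.tail ⟨e, Or.inl ⟨rfl, rfl, hbe⟩⟩
    have hclosB : ∀ e, G.tgt e ∈ S → G.src e ∉ S → b e = true := by
      intro e h1 h2
      cases hbe : b e with
      | true => rfl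
      | false =>
        exfalso
        apply h2
        simp only [hS, Finset.mem_filter, Finset.mem_univ, true_and] at h1 ⊢
        exact h1.tail ⟨e, Or.inr ⟨rfl, rfl, hbe⟩⟩
    have hwex : ∃ w ∈ S, D b w < 0 := by
      by_contra hno
      push_neg at hno
      set A := Finset.univ.filter (fun e => G.src e ∈ S ∧ G.tgt e ∉ S) with hA
      set B := Finset.univ.filter (fun e => G.tgt e ∈ S ∧ G.src e ∉ S) with hB
      have hbdib : ∑ v ∈ S, bd G (ib G b) v = -(B.card : ℤ) := by
        rw [sum_bd, ← hA, ← hB]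
        have hA0 : ∑ e ∈ A, ib G b e = 0 := by
          refine Finset.sum_eq_zero fun e he => ?_
          rw [hA, Finset.mem_filter] at he
          simp [ib, hclosA e he.2.1 he.2.2]
        have hB1 : ∑ e ∈ B, ib G b e = (B.card : ℤ) := by
          rw [Finset.sum_congr rfl (g := fun _ => (1:ℤ)) fun e he => ?_]
          · simp
          · rw [hB, Finset.mem_filter] at he
            simp [ib, hclosB e he.2.1 he.2.2]
        rw [hA0, hB1]
        ring
      have hzlow : -(B.card : ℤ) ≤ ∑ v ∈ S, z v := by
        have h1 : ((∑ v ∈ S, z v : ℤ) : ℝ) * r = ∑ v ∈ S, bd G h₀ v := by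
          push_cast
          rw [Finset.sum_mul]
          exact Finset.sum_congr rfl fun v _ => (hz v).symm
        have h2 : ∑ v ∈ S, bd G h₀ v = ∑ e ∈ A, h₀ e - ∑ e ∈ B, h₀ e := by
          rw [sum_bd, ← hA, ← hB]
        have h3 : (0:ℝ) ≤ ∑ e ∈ A, h₀ e :=
          Finset.sum_nonneg fun e _ => by have := (hmem e).1; linarith
        have h4 : ∑ e ∈ B, h₀ e ≤ (B.card : ℝ) * r := by
          refine le_trans (Finset.sum_le_card_nsmul B h₀ (r-1) fun e _ => (hmem e).2) ?_
          rw [nsmul_eq_mul]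
          have : (0:ℝ) ≤ (B.card : ℝ) := Nat.cast_nonneg _
          nlinarith
        have h5 : (-(B.card:ℝ)) * r ≤ ((∑ v ∈ S, z v : ℤ) : ℝ) * r := by
          rw [h1, h2]
          nlinarith
        have h6 : (-(B.card:ℝ)) ≤ ((∑ v ∈ S, z v : ℤ) : ℝ) :=
          le_of_mul_le_mul_right h5 hr0
        exact_mod_cast h6
      have h7 : D b u ≤ ∑ v ∈ S, D b v := Finset.single_le_sum (fun v hv => hno v hv) huS
      have h8 : ∑ v ∈ S, D b v = ∑ v ∈ S, bd G (ib G b) v - ∑ v ∈ S, z v := by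
        simp only [hD]
        exact Finset.sum_sub_distrib (f := fun v => bd G (ib G b) v) (g := z)
      rw [h8, hbdib] at h7
      omega
    obtain ⟨w, hwS, hw⟩ := hwex
    have hpath : Relation.ReflTransGen (step G b) u w := by
      simpa [hS, Finset.mem_filter] using hwS
    have hne : u ≠ w := fun h => by rw [h] at hu; omega
    rcases exists_nodup_chain_aux (step G b) hpath with h | ⟨l, hchain, hnd⟩
    · exact absurd h hne
    obtain ⟨b', hb'⟩ := flip_along G w l b u hchain hnd
    have hD' : ∀ v, D b' v = D b v - (if u = v then 1 else 0) + (if w = v then 1 else 0) := by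
      intro v
      simp only [hD]
      rw [hb' v]
      ring
    refine ih b' ?_
    have hlt : ∑ v, (D b' v).natAbs < ∑ v, (D b v).natAbs := by
      refine Finset.sum_lt_sum (fun v _ => ?_) ⟨u, Finset.mem_univ _, ?_⟩
      · have h := hD' v
        by_cases h1 : u = v
        · by_cases h2 : w = v
          · exact absurd (h2 ▸ h1) hne
          · rw [if_pos h1, if_neg h2] at h
            subst h1
            omega
        · by_cases h2 : w = v
          · rw [if_neg h1, if_pos h2] at h
            subst h2
            omega
          · rw [if_neg h1, if_neg h2] at h
            omega
      · have h := hD' u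
        rw [if_pos rfl, if_neg (fun h2 : w = u => hne h2.symm)] at h
        omega
    omega

lemma closedArc_eq {r : ℝ} (hr : 2 ≤ r) :
    closedArc r 1 (r-1) = (fun t : ℝ => (t : AddCircle r)) '' Set.Icc 1 (r-1) := by
  have h0 : (0:ℝ) < r := by linarith
  have heq : (r - 1 - 1) / r = (r-2)/r := by ring_nf
  have hfr : Int.fract ((r - 1 - 1) / r) = (r-2)/r := by
    rw [heq]
    exact Int.fract_eq_self.mpr ⟨div_nonneg (by linarith) h0.le, by rw [div_lt_one h0]; linarith⟩
  unfold closedArc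
  rw [hfr, div_mul_cancel₀ _ h0.ne']
  have : (1 : ℝ) + (r - 2) = r - 1 := by ring
  rw [this]

lemma coe_eq_zero_iff {r x : ℝ} :
    ((x : AddCircle r) = 0) ↔ ∃ k : ℤ, x = k * r := by
  rw [QuotientAddGroup.eq_zero_iff, AddSubgroup.mem_zmultiples_iff]
  constructor
  · rintro ⟨k, hk⟩; exact ⟨k, by rw [← hk]; push_cast [zsmul_eq_mul]; ring⟩
  · rintro ⟨k, hk⟩; exact ⟨k, by rw [hk]; push_cast [zsmul_eq_mul]; ring⟩

lemma coe_r_sub {r x : ℝ} : ((r - x : ℝ) : AddCircle r) = -(x : AddCircle r) := by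
  have h : ((r : ℝ) : AddCircle r) = 0 := AddCircle.coe_period r
  calc ((r - x : ℝ) : AddCircle r) = ((r:ℝ) : AddCircle r) - (x : AddCircle r) :=
        QuotientAddGroup.mk_sub _ r x
    _ = -(x : AddCircle r) := by rw [h, zero_sub]

end CNZFAux

/-- For a real `r ≥ 2` and a graph `G`: `G` admits a circular
nowhere-zero `r`-flow iff it admits an `r`-MCNZF; moreover, every `r`-MCNZF `f`
(on a reference orientation `σ₀`) lifts, on some orientation `σ`, to a
real-valued circular nowhere-zero `r`-flow `g` with `g e ≡ f_σ e (mod r)` for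
every edge `e`, where `f_σ e = f e` if `e` has the same direction in `σ₀` and
`σ`, and `f_σ e = -f e` otherwise. -/
theorem cnzf_iff_mcnzf (r : ℝ) (hr : 2 ≤ r) (G : Multigraph) :
    (G.HasCNZF r ↔
      ∃ (σ : G.E → ℤˣ) (f : G.E → AddCircle r),
        G.IsFlowOn σ f ∧ ∀ e, f e ∈ closedArc r 1 (r - 1)) ∧
    (∀ (σ₀ : G.E → ℤˣ) (f : G.E → AddCircle r),
      G.IsFlowOn σ₀ f → (∀ e, f e ∈ closedArc r 1 (r - 1)) →
      ∃ (σ : G.E → ℤˣ) (g : G.E → ℝ),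
        G.IsFlowOn σ g ∧ (∀ e, g e ∈ Set.Icc (1 : ℝ) (r - 1)) ∧
        ∀ e, ((g e : ℝ) : AddCircle r) = ((σ₀ e * σ e : ℤˣ) : ℤ) • f e) := by
  classical
  set φ : ℝ →+ AddCircle r := QuotientAddGroup.mk' (AddSubgroup.zmultiples r) with hφ
  have hφcoe : ∀ x : ℝ, φ x = (x : AddCircle r) := fun x => rfl
  have key : ∀ (σ₀ : G.E → ℤˣ) (f : G.E → AddCircle r),
      G.IsFlowOn σ₀ f → (∀ e, f e ∈ closedArc r 1 (r - 1)) →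
      ∃ (σ : G.E → ℤˣ) (g : G.E → ℝ),
        G.IsFlowOn σ g ∧ (∀ e, g e ∈ Set.Icc (1 : ℝ) (r - 1)) ∧
        ∀ e, ((g e : ℝ) : AddCircle r) = ((σ₀ e * σ e : ℤˣ) : ℤ) • f e := by
    intro σ₀ f hflow hmem
    have hrep : ∀ e, ∃ t, t ∈ Set.Icc (1:ℝ) (r-1) ∧ (t : AddCircle r) = f e := by
      intro e
      have h := hmem e
      rw [CNZFAux.closedArc_eq hr] at h
      obtain ⟨t, ht, ht'⟩ := h
      exact ⟨t, ht, ht'⟩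
    choose h₁ hmem₁ hcast₁ using hrep
    set h₀ : G.E → ℝ := fun e => if σ₀ e = 1 then h₁ e else r - h₁ e with hh₀
    have hmem₀ : ∀ e, h₀ e ∈ Set.Icc (1:ℝ) (r-1) := by
      intro e
      simp only [hh₀]
      split_ifs
      · exact hmem₁ e
      · obtain ⟨ha, hb⟩ := hmem₁ e
        exact ⟨by linarith, by linarith⟩
    have hcast₀ : ∀ e, ((h₀ e : ℝ) : AddCircle r) = (σ₀ e : ℤ) • f e := by
      intro e
      simp only [hh₀]
      rcases Int.units_eq_one_or (σ₀ e) with h | h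
      · rw [if_pos h, hcast₁ e, h]
        norm_num
      · rw [if_neg (by rw [h]; decide), CNZFAux.coe_r_sub, hcast₁ e, h]
        norm_num
    have hbd0 : ∀ v, ((CNZFAux.bd G h₀ v : ℝ) : AddCircle r) = 0 := by
      intro v
      have h1 : ((CNZFAux.bd G h₀ v : ℝ) : AddCircle r) =
          (∑ e ∈ Finset.univ.filter (fun e => G.src e = v), ((h₀ e : ℝ) : AddCircle r)) -
          (∑ e ∈ Finset.univ.filter (fun e => G.tgt e = v), ((h₀ e : ℝ) : AddCircle r)) := by
        rw [← hφcoe, CNZFAux.bd, map_sub, map_sum, map_sum]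
        simp only [hφcoe]
      rw [h1, Finset.sum_congr rfl (fun e _ => hcast₀ e),
        Finset.sum_congr rfl (fun e _ => hcast₀ e), hflow v, sub_self]
    have hzex : ∀ v, ∃ k : ℤ, CNZFAux.bd G h₀ v = k * r :=
      fun v => CNZFAux.coe_eq_zero_iff.mp (hbd0 v)
    choose z hz using hzex
    obtain ⟨b, hb⟩ := CNZFAux.exists_boolflow G r hr h₀ hmem₀ z hz
    refine ⟨fun e => if b e then -1 else 1, fun e => if b e then r - h₀ e else h₀ e, ?_, ?_, ?_⟩
    · -- the flow condition
      intro v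
      have hpoint : ∀ e, (((if b e then -1 else 1 : ℤˣ) : ℤ)) •
          (if b e then r - h₀ e else h₀ e) = h₀ e - r * ((CNZFAux.ib G b e : ℤ) : ℝ) := by
        intro e
        by_cases hbe : b e
        · rw [if_pos hbe, if_pos hbe]
          simp only [CNZFAux.ib, if_pos hbe]
          push_cast
          rw [neg_one_zsmul]
          ring
        · rw [if_neg hbe, if_neg hbe]
          simp only [CNZFAux.ib, if_neg hbe]
          push_cast
          rw [one_zsmul]
          ring
      have hbde : CNZFAux.bd G (fun e => (((if b e then -1 else 1 : ℤˣ) : ℤ)) •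
          (if b e then r - h₀ e else h₀ e)) v = 0 := by
        have h1 : CNZFAux.bd G (fun e => (((if b e then -1 else 1 : ℤˣ) : ℤ)) •
            (if b e then r - h₀ e else h₀ e)) v
            = CNZFAux.bd G h₀ v - r * ((CNZFAux.bd G (CNZFAux.ib G b) v : ℤ) : ℝ) := by
          unfold CNZFAux.bd
          simp_rw [hpoint]
          push_cast
          rw [Finset.sum_sub_distrib, Finset.sum_sub_distrib, ← Finset.mul_sum, ← Finset.mul_sum]
          ring
        rw [h1, hz v, hb v]
        ring
      exact sub_eq_zero.mp hbde
    · intro e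
      by_cases hbe : b e
      · simp only [hbe, if_true]
        obtain ⟨ha, hb'⟩ := hmem₀ e
        exact ⟨by linarith, by linarith⟩
      · simp only [hbe, Bool.false_eq_true, if_false]
        exact hmem₀ e
    · intro e
      by_cases hbe : b e
      · simp only [hbe, if_true]
        rw [CNZFAux.coe_r_sub, hcast₀ e]
        have hu : ((σ₀ e * -1 : ℤˣ) : ℤ) = -((σ₀ e : ℤ)) := by
          rw [Units.val_mul]
          simp
        rw [hu, neg_smul]
      · simp only [hbe, Bool.false_eq_true, if_false]
        rw [hcast₀ e, mul_one]
  refine ⟨⟨?_, ?_⟩, key⟩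
  · rintro ⟨σ, g, hflow, hmem⟩
    refine ⟨σ, fun e => ((g e : ℝ) : AddCircle r), ?_, ?_⟩
    · intro v
      have h := congrArg φ (hflow v)
      rw [map_sum, map_sum] at h
      calc ∑ e ∈ Finset.univ.filter (fun e => G.src e = v), (σ e : ℤ) • ((g e : ℝ) : AddCircle r)
          = ∑ e ∈ Finset.univ.filter (fun e => G.src e = v), φ ((σ e : ℤ) • g e) := by
            refine Finset.sum_congr rfl fun e _ => ?_
            rw [map_zsmul, hφcoe]
        _ = ∑ e ∈ Finset.univ.filter (fun e => G.tgt e = v), φ ((σ e : ℤ) • g e) := h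
        _ = ∑ e ∈ Finset.univ.filter (fun e => G.tgt e = v),
              (σ e : ℤ) • ((g e : ℝ) : AddCircle r) := by
            refine Finset.sum_congr rfl fun e _ => ?_
            rw [map_zsmul, hφcoe]
    · intro e
      rw [CNZFAux.closedArc_eq hr]
      exact ⟨g e, hmem e, rfl⟩
  · rintro ⟨σ₀, f, h1, h2⟩
    obtain ⟨σ, g, hg1, hg2, -⟩ := key σ₀ f h1 h2
    exact ⟨σ, g, hg1, hg2⟩
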